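/- Let ω > 0 and ε > 0 be real numbers, let J = !![0, 1; −ω^2, 0] be the coefficient matrix of the harmonic oscillator q̇ = p, ṗ = −ω²q, and let R = (1 − (ε/2) • J)⁻¹ * (1 + (ε/2) • J) be the implicit midpoint step matrix. Then: (a) 1 − (ε/2) • J is invertible; (b) det R = 1; (c) the characteristic polynomial of R.map Complex.ofReal has two distinct roots, each of modulus one (in particular neither root is repeated). Hence the implicit midpoint integrator is stable for the harmonic oscillator for every step size ε > 0. -/

import Mathlib

open Matrix Polynomial


private lemma charpoly_aux (a e1 e2 : ℂ) :
    (!![a, e1; e2, a]).charpoly = (X - C a) ^ 2 - C (e1 * e2) := by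
  rw [Matrix.charpoly, Matrix.det_fin_two]
  simp [charmatrix_apply_eq, charmatrix_apply_ne, Polynomial.C_mul]
  ring

private lemma quad_factor (a p lam₁ lam₂ : ℂ) (h1 : lam₁ + lam₂ = 2 * a)
    (h2 : lam₁ * lam₂ = a ^ 2 - p) :
    (X - C a) ^ 2 - C p = (X - C lam₁) * (X - C lam₂) := by
  have h3 : (X - C lam₁) * (X - C lam₂)
      = X ^ 2 - C (lam₁ + lam₂) * X + C (lam₁ * lam₂) := by
    rw [Polynomial.C_add, Polynomial.C_mul]; ring
  rw [h3, h1, h2, Polynomial.C_mul, Polynomial.C_sub, map_ofNat, map_pow]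
  ring

/-- **Implicit midpoint half of Proposition D.1 of the paper.** For the harmonic
oscillator `q̇ = p, ṗ = −ω²q` with coefficient matrix `J = [[0,1],[−ω²,0]]`, the
implicit midpoint step matrix `R = (1 − (ε/2)J)⁻¹(1 + (ε/2)J)` is well defined
(`1 − (ε/2)J` invertible), has unit determinant, and its characteristic polynomial has
two distinct roots each of modulus one: the implicit midpoint integrator is stable for
every step size `ε > 0`. -/
theorem implicit_midpoint_stable_harmonic_oscillator
    (ω ε : ℝ) (hω : 0 < ω) (hε : 0 < ε)
    (J : Matrix (Fin 2) (Fin 2) ℝ) (hJ : J = !![0, 1; -ω ^ 2, 0])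
    (R : Matrix (Fin 2) (Fin 2) ℝ)
    (hR : R = (1 - (ε / 2) • J)⁻¹ * (1 + (ε / 2) • J)) :
    IsUnit (1 - (ε / 2) • J) ∧
    R.det = 1 ∧
    ∃ lam₁ lam₂ : ℂ, lam₁ ≠ lam₂ ∧ ‖lam₁‖ = 1 ∧ ‖lam₂‖ = 1 ∧
      (R.map Complex.ofReal).charpoly = (X - C lam₁) * (X - C lam₂) := by
  subst hJ
  set d : ℝ := 1 + ε ^ 2 * ω ^ 2 / 4 with hdef
  have hd : (0:ℝ) < d := by positivity
  have hdne : d ≠ 0 := ne_of_gt hd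
  have hA : (1 : Matrix (Fin 2) (Fin 2) ℝ) - (ε / 2) • !![0, 1; -ω ^ 2, 0]
      = !![1, -(ε/2); ε*ω^2/2, 1] := by
    ext i j
    fin_cases i <;> fin_cases j <;>
      simp [Matrix.one_apply] <;> ring
  have hB : (1 : Matrix (Fin 2) (Fin 2) ℝ) + (ε / 2) • !![0, 1; -ω ^ 2, 0]
      = !![1, ε/2; -(ε*ω^2/2), 1] := by
    ext i j
    fin_cases i <;> fin_cases j <;>
      simp [Matrix.one_apply] <;> ring
  have hdetA : (!![1, -(ε/2); ε*ω^2/2, 1] : Matrix (Fin 2) (Fin 2) ℝ).det = d := by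
    simp [Matrix.det_fin_two_of, hdef]; ring
  have hAu : IsUnit (!![1, -(ε/2); ε*ω^2/2, 1] : Matrix (Fin 2) (Fin 2) ℝ) := by
    rw [Matrix.isUnit_iff_isUnit_det, hdetA, isUnit_iff_ne_zero]
    exact hdne
  set Re : Matrix (Fin 2) (Fin 2) ℝ :=
    !![(1 - ε^2*ω^2/4)/d, ε/d; -(ε*ω^2)/d, (1 - ε^2*ω^2/4)/d] with hRe
  have hAR : !![1, -(ε/2); ε*ω^2/2, 1] * Re = !![1, ε/2; -(ε*ω^2/2), 1] := by
    rw [hRe]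
    ext i j
    fin_cases i <;> fin_cases j <;>
      simp [Matrix.mul_apply, Fin.sum_univ_two] <;> field_simp <;> ring
  have hReq : R = Re := by
    rw [hR, hA, hB, ← hAR, ← Matrix.mul_assoc,
      Matrix.nonsing_inv_mul _ ((Matrix.isUnit_iff_isUnit_det _).mp hAu), Matrix.one_mul]
  have hdetR : R.det = 1 := by
    rw [hReq, hRe]
    simp only [Matrix.det_fin_two_of]
    field_simp
    ring
  refine ⟨hA ▸ hAu, hdetR, ?_⟩
  set a : ℝ := (1 - ε^2*ω^2/4)/d with ha
  set b : ℝ := ε*ω/d with hb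
  have hb0 : 0 < b := by positivity
  have hab : a^2 + b^2 = 1 := by
    rw [ha, hb]
    field_simp
    ring
  refine ⟨(a:ℂ) + (b:ℂ) * Complex.I, (a:ℂ) - (b:ℂ) * Complex.I, ?_, ?_, ?_, ?_⟩
  · intro h
    have := congrArg Complex.im h
    simp at this
    linarith
  · rw [Complex.norm_add_mul_I, hab, Real.sqrt_one]
  · rw [show ((a:ℂ) - (b:ℂ) * Complex.I) = ((a:ℝ):ℂ) + ((-b:ℝ):ℂ) * Complex.I by
      push_cast; ring, Complex.norm_add_mul_I,
      show (-b)^2 = b^2 by ring, hab, Real.sqrt_one]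
  · have hmap : R.map Complex.ofReal
        = !![((a:ℝ):ℂ), ((ε/d : ℝ):ℂ); ((-(ε*ω^2)/d : ℝ):ℂ), ((a:ℝ):ℂ)] := by
      rw [hReq, hRe]
      ext i j
      fin_cases i <;> fin_cases j <;> simp [Matrix.map_apply, ha]
    rw [hmap, charpoly_aux]
    apply quad_factor
    · push_cast; ring
    · have hprodI : ((a:ℂ) + (b:ℂ) * Complex.I) * ((a:ℂ) - (b:ℂ) * Complex.I)
          = ((a ^ 2 + b ^ 2 : ℝ) : ℂ) := by
        push_cast
        ring_nf
        rw [Complex.I_sq]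
        ring
      have hre : (a:ℝ) ^ 2 - (ε/d) * (-(ε*ω^2)/d) = a ^ 2 + b ^ 2 := by
        rw [hb]
        field_simp
        ring
      rw [hprodI, ← hre]
      push_cast
      ring
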